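/- arXiv:1102.0681 — 2 statements merged into one kernel-verified Lean document; each statement's English description precedes it below -/
import Mathlib

section
/- Let ρ > 0, let φ belong to the class 𝒱 with β_φ := sup_{t>1} (log φ̲(t))/(log t), and let γ ∈ ℝ with γ < β_φ. Then sup_{M ≥ 1} φ(2^M)^ρ 2^{−Mγρ} Σ_{m=M+1}^{∞} 2^{mγρ} φ(2^m)^{−ρ} < ∞ (in particular each series Σ_{m=M+1}^{∞} 2^{mγρ} φ(2^m)^{−ρ} converges). -/
open scoped ENNReal

/-- `φ̲(t) = inf_{s ≥ 1} φ(ts)/φ(s)`. -/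
noncomputable def lowerRatio (φ : ℝ → ℝ) (t : ℝ) : ℝ :=
  sInf {r : ℝ | ∃ s : ℝ, 1 ≤ s ∧ r = φ (t * s) / φ s}

/-- `φ̄(t) = sup_{s ≥ 1} φ(ts)/φ(s)`. -/
noncomputable def upperRatio (φ : ℝ → ℝ) (t : ℝ) : ℝ :=
  sSup {r : ℝ | ∃ s : ℝ, 1 ≤ s ∧ r = φ (t * s) / φ s}

/-- A measurable function `φ : [1,∞) → (0,∞)` belongs to the class `𝒱` if
`φ̲` and `φ̄` are measurable and `0 < φ̲(t)` and `φ̄(t) < ∞` for all `t ≥ 1`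
(finiteness of `φ̄(t)` is expressed by boundedness of the defining set). -/
structure ClassV (φ : ℝ → ℝ) : Prop where
  pos : ∀ s : ℝ, 1 ≤ s → 0 < φ s
  meas : Measurable fun s : Set.Ici (1 : ℝ) => φ s
  lower_pos : ∀ t : ℝ, 1 ≤ t → 0 < lowerRatio φ t
  upper_bdd : ∀ t : ℝ, 1 ≤ t → BddAbove {r : ℝ | ∃ s : ℝ, 1 ≤ s ∧ r = φ (t * s) / φ s}
  lower_meas : Measurable fun t : Set.Ici (1 : ℝ) => lowerRatio φ t
  upper_meas : Measurable fun t : Set.Ici (1 : ℝ) => upperRatio φ t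

/-- `α_φ = inf_{t > 1} log φ̄(t) / log t`. -/
noncomputable def alphaV (φ : ℝ → ℝ) : ℝ :=
  sInf {r : ℝ | ∃ t : ℝ, 1 < t ∧ r = Real.log (upperRatio φ t) / Real.log t}

/-- `β_φ = sup_{t > 1} log φ̲(t) / log t`. -/
noncomputable def betaV (φ : ℝ → ℝ) : ℝ :=
  sSup {r : ℝ | ∃ t : ℝ, 1 < t ∧ r = Real.log (lowerRatio φ t) / Real.log t}

open MeasureTheory Real Set

section SteinhausAux

/-- Steinhaus-type lemma: a measurable superadditive function on `[0, ∞)` is bounded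
below on compact subsets of `(0, ∞)`. -/
lemma steinhaus_lower (F : ℝ → ℝ) (hF : Measurable F)
    (hsuper : ∀ x y : ℝ, 0 ≤ x → 0 ≤ y → F x + F y ≤ F (x + y))
    {a b : ℝ} (ha : 0 < a) (hab : a ≤ b) :
    ∃ C : ℝ, ∀ v : ℝ, a ≤ v → v ≤ b → C ≤ F v := by
  set L : ℝ := a / 3 with hL_def
  have hL : 0 < L := by positivity
  -- Step 1 : choose N with large sublevel set
  set X : ℕ → Set ℝ := fun n => Icc 0 L ∩ F ⁻¹' Ici (-(n : ℝ)) with hX_def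
  have hXmeas : ∀ n, MeasurableSet (X n) := fun n =>
    measurableSet_Icc.inter (hF measurableSet_Ici)
  have hXmono : Monotone X := by
    intro m n hmn x hx
    refine ⟨hx.1, ?_⟩
    have h2 := hx.2
    simp only [Set.mem_preimage, Set.mem_Ici] at h2 ⊢
    have : (m : ℝ) ≤ n := Nat.cast_le.mpr hmn
    linarith
  have hXunion : (⋃ n, X n) = Icc 0 L := by
    apply Set.Subset.antisymm
    · exact Set.iUnion_subset fun n => Set.inter_subset_left
    · intro x hx
      obtain ⟨n, hn⟩ := exists_nat_ge (-(F x))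
      exact Set.mem_iUnion.mpr ⟨n, hx, by simp; linarith⟩
  have hvol : volume (Icc (0:ℝ) L) = ENNReal.ofReal L := by simp
  have hbig : ∃ N : ℕ, ENNReal.ofReal (7 * L / 8) < volume (X N) := by
    have h1 : volume (⋃ n, X n) = ⨆ n, volume (X n) := hXmono.measure_iUnion
    have h2 : ENNReal.ofReal (7 * L / 8) < volume (⋃ n, X n) := by
      rw [hXunion, hvol]
      exact ENNReal.ofReal_lt_ofReal_iff (by positivity) |>.mpr (by linarith)
    rw [h1] at h2
    exact lt_iSup_iff.mp h2
  obtain ⟨N, hN⟩ := hbig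
  -- Step 2 : base bound on [L, 3L/2]
  have base : ∀ v : ℝ, L ≤ v → v ≤ 3 * L / 2 → -(2 * (N : ℝ)) ≤ F v := by
    intro v hv1 hv2
    set I : Set ℝ := Icc (v - L) L with hI_def
    set A : Set ℝ := X N ∩ I with hA_def
    set B : Set ℝ := (fun x => v - x) ⁻¹' A with hB_def
    have hAmeas : MeasurableSet A := (hXmeas N).inter measurableSet_Icc
    have hBmeas : MeasurableSet B := (measurable_const.sub measurable_id) hAmeas
    have hBsubI : B ⊆ I := by
      intro x hx
      have h : v - x ∈ I := hx.2
      simp only [hI_def, Set.mem_Icc] at h ⊢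
      constructor <;> linarith [h.1, h.2]
    have hvolB : volume B = volume A :=
      (Measure.measurePreserving_sub_left volume v).measure_preimage hAmeas.nullMeasurableSet
    have hXA : X N ⊆ A ∪ Ico 0 (v - L) := by
      intro x hx
      rcases le_or_gt (v - L) x with h | h
      · exact Or.inl ⟨hx, h, hx.1.2⟩
      · exact Or.inr ⟨hx.1.1, h⟩
    have hvolA : volume (X N) ≤ volume A + ENNReal.ofReal (v - L) := by
      calc volume (X N) ≤ volume (A ∪ Ico 0 (v - L)) := measure_mono hXA
        _ ≤ volume A + volume (Ico (0:ℝ) (v - L)) := measure_union_le _ _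
        _ = volume A + ENNReal.ofReal (v - L) := by simp
    have hAB : ∃ x, x ∈ A ∩ B := by
      by_contra hcon
      push_neg at hcon
      have hdisj : Disjoint A B := by
        rw [Set.disjoint_iff_inter_eq_empty]
        ext x; simp only [Set.mem_empty_iff_false, iff_false]
        exact fun h => hcon x h
      have hunion : volume A + volume B = volume (A ∪ B) := (measure_union hdisj hBmeas).symm
      have hsub : A ∪ B ⊆ I := Set.union_subset Set.inter_subset_right hBsubI
      have hle : volume A + volume B ≤ ENNReal.ofReal (L - (v - L)) := by
        rw [hunion]
        calc volume (A ∪ B) ≤ volume I := measure_mono hsub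
          _ = ENNReal.ofReal (L - (v - L)) := by simp [hI_def]
      rw [hvolB] at hle
      have key : ENNReal.ofReal (7 * L / 8) + ENNReal.ofReal (7 * L / 8)
          < ENNReal.ofReal (L - (v - L)) + (ENNReal.ofReal (v - L) + ENNReal.ofReal (v - L)) := by
        calc ENNReal.ofReal (7 * L / 8) + ENNReal.ofReal (7 * L / 8)
            < (volume A + ENNReal.ofReal (v - L)) + (volume A + ENNReal.ofReal (v - L)) :=
              ENNReal.add_lt_add (lt_of_lt_of_le hN hvolA) (lt_of_lt_of_le hN hvolA)
          _ = (volume A + volume A) + (ENNReal.ofReal (v - L) + ENNReal.ofReal (v - L)) := by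
              rw [add_add_add_comm]
          _ ≤ ENNReal.ofReal (L - (v - L)) + (ENNReal.ofReal (v - L) + ENNReal.ofReal (v - L)) :=
              add_le_add_left hle _
      rw [← ENNReal.ofReal_add (by positivity) (by positivity),
        ← ENNReal.ofReal_add (by linarith) (by linarith),
        ← ENNReal.ofReal_add (by linarith) (by linarith)] at key
      have := (ENNReal.ofReal_lt_ofReal_iff (by linarith)).mp key
      linarith
    obtain ⟨x, hxA, hxB⟩ := hAB
    have hx1 : x ∈ X N := hxA.1
    have hx2 : v - x ∈ X N := hxB.1
    have hx0 : 0 ≤ x := hx1.1.1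
    have hvx0 : 0 ≤ v - x := hx2.1.1
    have hFx : -(N : ℝ) ≤ F x := hx1.2
    have hFvx : -(N : ℝ) ≤ F (v - x) := hx2.2
    have := hsuper x (v - x) hx0 hvx0
    rw [add_sub_cancel] at this
    linarith
  -- Step 3 : propagate
  set C₀ : ℝ := -(2 * (N : ℝ)) with hC0_def
  have hFk : ∀ k : ℕ, 1 ≤ k → ∀ x : ℝ, 0 ≤ x → (k : ℝ) * F x ≤ F ((k : ℝ) * x) := by
    intro k hk
    induction k with
    | zero => omega
    | succ n ih =>
      intro x hx
      rcases Nat.eq_or_lt_of_le hk with h | h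
      · simp [← h]
      · have hn : 1 ≤ n := by omega
        have h1 := ih hn x hx
        have h2 := hsuper ((n : ℝ) * x) x (by positivity) hx
        push_cast
        calc ((n : ℝ) + 1) * F x = (n : ℝ) * F x + F x := by ring
          _ ≤ F ((n : ℝ) * x) + F x := by linarith
          _ ≤ F ((n : ℝ) * x + x) := h2
          _ = F (((n : ℝ) + 1) * x) := by ring_nf
  refine ⟨-(b / L * |C₀|), fun v hav hvb => ?_⟩
  have hv0 : 0 < v := lt_of_lt_of_le ha hav
  set k : ℕ := ⌈2 * v / (3 * L)⌉₊ with hk_def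
  have hk_lb : 2 * v / (3 * L) ≤ (k : ℝ) := Nat.le_ceil _
  have hk_ub : (k : ℝ) < 2 * v / (3 * L) + 1 := Nat.ceil_lt_add_one (by positivity)
  have h3L : 3 * L ≤ v := by rw [hL_def]; linarith
  have hk_le : (k : ℝ) ≤ v / L := by
    have : 2 * v / (3 * L) + 1 ≤ v / L := by
      rw [div_add' _ _ _ (by positivity), div_le_div_iff₀ (by positivity) hL]
      ring_nf
      nlinarith
    linarith
  have hk1 : 1 ≤ k := by
    by_contra h
    push_neg at h
    interval_cases k
    simp only [Nat.cast_zero] at hk_lb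
    have : (0:ℝ) < 2 * v / (3 * L) := by positivity
    linarith
  have hkpos : (0 : ℝ) < k := by exact_mod_cast hk1
  have hvk1 : L ≤ v / k := by
    rw [le_div_iff₀ hkpos]
    calc (L : ℝ) * k ≤ L * (v / L) := by
          exact mul_le_mul_of_nonneg_left hk_le hL.le
      _ = v := by field_simp
  have hvk2 : v / k ≤ 3 * L / 2 := by
    have h := (div_le_iff₀ (by positivity : (0:ℝ) < 3 * L)).mp hk_lb
    rw [div_le_div_iff₀ hkpos (by norm_num : (0:ℝ) < 2)]
    nlinarith
  have hbase := base (v / k) hvk1 hvk2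
  have hmul := hFk k hk1 (v / k) (by positivity)
  rw [mul_div_cancel₀ v (ne_of_gt hkpos)] at hmul
  have h1 : (k : ℝ) * C₀ ≤ (k : ℝ) * F (v / k) :=
    mul_le_mul_of_nonneg_left hbase hkpos.le
  have h2 : -(b / L * |C₀|) ≤ (k : ℝ) * C₀ := by
    have hC0abs : -|C₀| ≤ C₀ := neg_abs_le C₀
    have habs : (0:ℝ) ≤ |C₀| := abs_nonneg _
    have hkb : (k : ℝ) ≤ b / L := le_trans hk_le (by gcongr)
    nlinarith
  linarith

end SteinhausAux

section Basics

variable {φ : ℝ → ℝ}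

lemma lr_le (hφ : ClassV φ) {t s : ℝ} (ht : 1 ≤ t) (hs : 1 ≤ s) :
    lowerRatio φ t ≤ φ (t * s) / φ s := by
  apply csInf_le
  · refine ⟨0, ?_⟩
    rintro r ⟨u, hu, rfl⟩
    have h1 : 0 < φ (t * u) := hφ.pos _ (by nlinarith)
    have h2 : 0 < φ u := hφ.pos _ hu
    positivity
  · exact ⟨s, hs, rfl⟩

lemma lr_mul_le (hφ : ClassV φ) {t s : ℝ} (ht : 1 ≤ t) (hs : 1 ≤ s) :
    lowerRatio φ t * φ s ≤ φ (t * s) :=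
  (le_div_iff₀ (hφ.pos s hs)).mp (lr_le hφ ht hs)

lemma lr_supermul (hφ : ClassV φ) {a b : ℝ} (ha : 1 ≤ a) (hb : 1 ≤ b) :
    lowerRatio φ a * lowerRatio φ b ≤ lowerRatio φ (a * b) := by
  have hne : {r : ℝ | ∃ s : ℝ, 1 ≤ s ∧ r = φ (a * b * s) / φ s}.Nonempty :=
    ⟨φ (a * b * 1) / φ 1, ⟨1, le_refl 1, rfl⟩⟩
  apply le_csInf hne
  rintro r ⟨s, hs, rfl⟩
  have hbs : 1 ≤ b * s := by nlinarith
  have h1 : lowerRatio φ b * φ s ≤ φ (b * s) := lr_mul_le hφ hb hs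
  have h2 : lowerRatio φ a * φ (b * s) ≤ φ (a * (b * s)) := lr_mul_le hφ ha hbs
  have hpa := hφ.lower_pos a ha
  have hps := hφ.pos s hs
  rw [le_div_iff₀ hps]
  calc lowerRatio φ a * lowerRatio φ b * φ s = lowerRatio φ a * (lowerRatio φ b * φ s) :=
        mul_assoc _ _ _
    _ ≤ lowerRatio φ a * φ (b * s) := mul_le_mul_of_nonneg_left h1 hpa.le
    _ ≤ φ (a * (b * s)) := h2
    _ = φ (a * b * s) := by rw [mul_assoc]

lemma lr_one (hφ : ClassV φ) : lowerRatio φ 1 = 1 := by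
  have : {r : ℝ | ∃ s : ℝ, 1 ≤ s ∧ r = φ (1 * s) / φ s} = {1} := by
    ext r
    simp only [Set.mem_setOf_eq, Set.mem_singleton_iff]
    constructor
    · rintro ⟨s, hs, rfl⟩
      rw [one_mul, div_self (hφ.pos s hs).ne']
    · rintro rfl
      exact ⟨1, le_refl 1, by rw [one_mul, div_self (hφ.pos 1 le_rfl).ne']⟩
  rw [lowerRatio, this, csInf_singleton]

lemma lr_pow (hφ : ClassV φ) {t : ℝ} (ht : 1 ≤ t) :
    ∀ n : ℕ, lowerRatio φ t ^ n ≤ lowerRatio φ (t ^ n) := by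
  intro n
  induction n with
  | zero => simp [lr_one hφ]
  | succ n ih =>
    have htn : 1 ≤ t ^ n := one_le_pow₀ ht
    calc lowerRatio φ t ^ (n + 1) = lowerRatio φ t ^ n * lowerRatio φ t := pow_succ _ _
      _ ≤ lowerRatio φ (t ^ n) * lowerRatio φ t := by
          apply mul_le_mul_of_nonneg_right ih (hφ.lower_pos t ht).le
      _ ≤ lowerRatio φ (t ^ n * t) := lr_supermul hφ htn ht
      _ = lowerRatio φ (t ^ (n + 1)) := by rw [pow_succ]

lemma lr_dyadic (hφ : ClassV φ) {t₀ r : ℝ} (ht₀ : 1 < t₀)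
    (hgt₀ : t₀ ^ r ≤ lowerRatio φ t₀)
    {c : ℝ} (hc : 0 < c) (hcb : ∀ u : ℝ, t₀ ≤ u → u ≤ t₀ ^ (2 : ℕ) → c ≤ lowerRatio φ u) :
    ∃ c₁ : ℝ, 0 < c₁ ∧
      ∀ j : ℕ, 1 ≤ j → c₁ * (2 : ℝ) ^ ((j : ℝ) * r) ≤ lowerRatio φ (2 ^ j) := by
  have t₀pos : (0 : ℝ) < t₀ := lt_trans one_pos ht₀
  have hlogt₀ : 0 < Real.log t₀ := Real.log_pos ht₀
  set β : ℝ := Real.log 2 / Real.log t₀ with hβ_def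
  have hβ : 0 < β := div_pos (Real.log_pos one_lt_two) hlogt₀
  set J₀ : ℕ := ⌈(2 : ℝ) / β⌉₊ + 1 with hJ₀_def
  have h2j : ∀ j : ℕ, (2 : ℝ) ^ (j : ℕ) = t₀ ^ ((j : ℝ) * β) := by
    intro j
    rw [← Real.rpow_natCast 2 j, Real.rpow_def_of_pos two_pos, Real.rpow_def_of_pos t₀pos]
    congr 1
    rw [hβ_def]
    field_simp
  have main : ∀ j : ℕ, J₀ ≤ j →
      (c * min 1 (t₀ ^ (-(2 : ℝ) * r))) * (2 : ℝ) ^ ((j : ℝ) * r) ≤ lowerRatio φ (2 ^ j) := by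
    intro j hj
    have hjβ2 : 2 ≤ (j : ℝ) * β := by
      have h1 : (2 : ℝ) / β ≤ (⌈(2 : ℝ) / β⌉₊ : ℝ) := Nat.le_ceil _
      have h2 : ((⌈(2 : ℝ) / β⌉₊ : ℕ) : ℝ) ≤ (j : ℝ) := by
        exact_mod_cast le_trans (Nat.le_succ _) hj
      have := (div_le_iff₀ hβ).mp (le_trans h1 h2)
      linarith
    set K : ℕ := ⌊(j : ℝ) * β⌋₊ with hK_def
    have hK2 : 2 ≤ K := Nat.le_floor (by exact_mod_cast hjβ2)
    set k : ℕ := K - 1 with hk_def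
    have hk1 : 1 ≤ k := by omega
    have hkK : ((k : ℝ) + 1) = (K : ℝ) := by
      have : k + 1 = K := by omega
      exact_mod_cast congrArg (Nat.cast : ℕ → ℝ) this
    have hfl : (K : ℝ) ≤ (j : ℝ) * β := Nat.floor_le (by positivity)
    have hfl2 : (j : ℝ) * β < (K : ℝ) + 1 := Nat.lt_floor_add_one _
    have ht₀k_pos : (0 : ℝ) < t₀ ^ (k : ℕ) := pow_pos t₀pos k
    have hlow : t₀ ^ (k : ℕ) * t₀ ≤ (2 : ℝ) ^ (j : ℕ) := by
      rw [h2j j, ← pow_succ]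
      calc t₀ ^ (k + 1 : ℕ) = t₀ ^ (((k + 1 : ℕ) : ℝ)) := (Real.rpow_natCast _ _).symm
        _ ≤ t₀ ^ ((j : ℝ) * β) := by
            apply Real.rpow_le_rpow_of_exponent_le ht₀.le
            push_cast
            linarith [hkK, hfl]
    have hup : (2 : ℝ) ^ (j : ℕ) < t₀ ^ (k : ℕ) * t₀ ^ (2 : ℕ) := by
      rw [h2j j, ← pow_add]
      calc t₀ ^ ((j : ℝ) * β) < t₀ ^ (((k + 2 : ℕ) : ℝ)) := by
            apply Real.rpow_lt_rpow_of_exponent_lt ht₀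
            push_cast
            linarith [hkK, hfl2]
        _ = t₀ ^ (k + 2 : ℕ) := Real.rpow_natCast _ _
    set u : ℝ := (2 : ℝ) ^ (j : ℕ) / t₀ ^ (k : ℕ) with hu_def
    have hu1 : t₀ ≤ u := by
      rw [hu_def, le_div_iff₀ ht₀k_pos]
      linarith [hlow]
    have hu2 : u ≤ t₀ ^ (2 : ℕ) := by
      rw [hu_def, div_le_iff₀ ht₀k_pos]
      nlinarith [hup]
    have hdecomp : (2 : ℝ) ^ (j : ℕ) = t₀ ^ (k : ℕ) * u := by
      rw [hu_def, mul_comm, div_mul_cancel₀ _ ht₀k_pos.ne']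
    have ht₀k1 : 1 ≤ t₀ ^ (k : ℕ) := one_le_pow₀ ht₀.le
    have hu1' : 1 ≤ u := le_trans ht₀.le hu1
    have hstep1 : lowerRatio φ (t₀ ^ (k : ℕ)) * lowerRatio φ u ≤ lowerRatio φ (2 ^ j) := by
      rw [hdecomp]
      exact lr_supermul hφ ht₀k1 hu1'
    have hstep2 : (t₀ ^ r) ^ (k : ℕ) ≤ lowerRatio φ (t₀ ^ (k : ℕ)) :=
      le_trans (pow_le_pow_left₀ (Real.rpow_pos_of_pos t₀pos r).le hgt₀ k) (lr_pow hφ ht₀.le k)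
    have hstep3 : c ≤ lowerRatio φ u := hcb u hu1 hu2
    have hprod : (t₀ ^ r) ^ (k : ℕ) * c ≤ lowerRatio φ (2 ^ j) := by
      calc (t₀ ^ r) ^ (k : ℕ) * c ≤ lowerRatio φ (t₀ ^ (k : ℕ)) * lowerRatio φ u := by
            apply mul_le_mul hstep2 hstep3 hc.le
            exact le_trans (pow_nonneg (Real.rpow_pos_of_pos t₀pos r).le k) hstep2
        _ ≤ lowerRatio φ (2 ^ j) := hstep1
    have hexp : min 1 (t₀ ^ (-(2 : ℝ) * r)) * (2 : ℝ) ^ ((j : ℝ) * r) ≤ (t₀ ^ r) ^ (k : ℕ) := by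
      have e1 : (t₀ ^ r) ^ (k : ℕ) = t₀ ^ (r * (k : ℝ)) := by
        rw [← Real.rpow_natCast (t₀ ^ r) k, ← Real.rpow_mul t₀pos.le]
      have e2 : (2 : ℝ) ^ ((j : ℝ) * r) = t₀ ^ ((j : ℝ) * β * r) := by
        rw [Real.rpow_mul (by norm_num : (0:ℝ) ≤ 2), Real.rpow_natCast 2 j, h2j j,
          ← Real.rpow_mul t₀pos.le]
      rw [e1, e2]
      rcases le_or_gt 0 r with hr0 | hr0
      · calc min 1 (t₀ ^ (-(2 : ℝ) * r)) * t₀ ^ ((j : ℝ) * β * r)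
            ≤ t₀ ^ (-(2 : ℝ) * r) * t₀ ^ ((j : ℝ) * β * r) :=
              mul_le_mul_of_nonneg_right (min_le_right _ _) (Real.rpow_pos_of_pos t₀pos _).le
          _ = t₀ ^ (-(2 : ℝ) * r + (j : ℝ) * β * r) := (Real.rpow_add t₀pos _ _).symm
          _ ≤ t₀ ^ (r * (k : ℝ)) := by
              apply Real.rpow_le_rpow_of_exponent_le ht₀.le
              nlinarith [hfl2, hkK]
      · calc min 1 (t₀ ^ (-(2 : ℝ) * r)) * t₀ ^ ((j : ℝ) * β * r)
            ≤ 1 * t₀ ^ ((j : ℝ) * β * r) :=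
              mul_le_mul_of_nonneg_right (min_le_left _ _) (Real.rpow_pos_of_pos t₀pos _).le
          _ = t₀ ^ ((j : ℝ) * β * r) := one_mul _
          _ ≤ t₀ ^ (r * (k : ℝ)) := by
              apply Real.rpow_le_rpow_of_exponent_le ht₀.le
              nlinarith [hfl, hkK]
    calc (c * min 1 (t₀ ^ (-(2 : ℝ) * r))) * (2 : ℝ) ^ ((j : ℝ) * r)
        = c * (min 1 (t₀ ^ (-(2 : ℝ) * r)) * (2 : ℝ) ^ ((j : ℝ) * r)) := by ring
      _ ≤ c * ((t₀ ^ r) ^ (k : ℕ)) := mul_le_mul_of_nonneg_left hexp hc.le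
      _ = (t₀ ^ r) ^ (k : ℕ) * c := mul_comm _ _
      _ ≤ lowerRatio φ (2 ^ j) := hprod
  have hne : (Finset.Icc 1 J₀).Nonempty := ⟨1, by simp [hJ₀_def]⟩
  set c₂ : ℝ := (Finset.Icc 1 J₀).inf' hne
      (fun j => lowerRatio φ (2 ^ j) * (2 : ℝ) ^ (-((j : ℝ) * r))) with hc₂_def
  have hc₂pos : 0 < c₂ := by
    rw [hc₂_def, Finset.lt_inf'_iff]
    intro j hj
    have h1 : (1 : ℝ) ≤ 2 ^ j := one_le_pow₀ one_le_two
    exact mul_pos (hφ.lower_pos _ h1) (Real.rpow_pos_of_pos two_pos _)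
  have hmin_pos : 0 < min 1 (t₀ ^ (-(2 : ℝ) * r)) :=
    lt_min one_pos (Real.rpow_pos_of_pos t₀pos _)
  refine ⟨min (c * min 1 (t₀ ^ (-(2 : ℝ) * r))) c₂, lt_min (mul_pos hc hmin_pos) hc₂pos,
    fun j hj => ?_⟩
  have h2jr_pos : (0 : ℝ) < (2 : ℝ) ^ ((j : ℝ) * r) := Real.rpow_pos_of_pos two_pos _
  rcases le_or_gt J₀ j with h | h
  · calc min (c * min 1 (t₀ ^ (-(2 : ℝ) * r))) c₂ * (2 : ℝ) ^ ((j : ℝ) * r)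
        ≤ (c * min 1 (t₀ ^ (-(2 : ℝ) * r))) * (2 : ℝ) ^ ((j : ℝ) * r) :=
          mul_le_mul_of_nonneg_right (min_le_left _ _) h2jr_pos.le
      _ ≤ lowerRatio φ (2 ^ j) := main j h
  · have hjmem : j ∈ Finset.Icc 1 J₀ := Finset.mem_Icc.mpr ⟨hj, h.le⟩
    have h1 : c₂ ≤ lowerRatio φ (2 ^ j) * (2 : ℝ) ^ (-((j : ℝ) * r)) := by
      rw [hc₂_def]
      exact Finset.inf'_le _ hjmem
    have h2 : (2 : ℝ) ^ (-((j : ℝ) * r)) * (2 : ℝ) ^ ((j : ℝ) * r) = 1 := by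
      rw [← Real.rpow_add two_pos]
      simp
    calc min (c * min 1 (t₀ ^ (-(2 : ℝ) * r))) c₂ * (2 : ℝ) ^ ((j : ℝ) * r)
        ≤ c₂ * (2 : ℝ) ^ ((j : ℝ) * r) :=
          mul_le_mul_of_nonneg_right (min_le_right _ _) h2jr_pos.le
      _ ≤ (lowerRatio φ (2 ^ j) * (2 : ℝ) ^ (-((j : ℝ) * r))) * (2 : ℝ) ^ ((j : ℝ) * r) :=
          mul_le_mul_of_nonneg_right h1 h2jr_pos.le
      _ = lowerRatio φ (2 ^ j) * ((2 : ℝ) ^ (-((j : ℝ) * r)) * (2 : ℝ) ^ ((j : ℝ) * r)) := by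
          ring
      _ = lowerRatio φ (2 ^ j) := by rw [h2, mul_one]

end Basics

set_option maxHeartbeats 1600000 in
/-- Let `ρ > 0`, `φ ∈ 𝒱` and `γ < β_φ`.  Then each tail series
`∑_{m=M+1}^{∞} 2^{mγρ} φ(2^m)^{-ρ}` converges and
`sup_{M ≥ 1} φ(2^M)^ρ 2^{-Mγρ} ∑_{m=M+1}^{∞} 2^{mγρ} φ(2^m)^{-ρ} < ∞`. -/
theorem classV_tail_sum_bound_beta (ρ : ℝ) (hρ : 0 < ρ) (φ : ℝ → ℝ) (hφ : ClassV φ)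
    (γ : ℝ) (hγ : γ < betaV φ) :
    (∀ M : ℕ, 1 ≤ M →
      Summable (fun m : ℕ =>
        (2 : ℝ) ^ (((m + (M + 1) : ℕ) : ℝ) * γ * ρ) * φ ((2 : ℝ) ^ (m + (M + 1))) ^ (-ρ))) ∧
    ∃ C : ℝ, ∀ M : ℕ, 1 ≤ M →
      φ ((2 : ℝ) ^ M) ^ ρ * (2 : ℝ) ^ (-(M : ℝ) * γ * ρ) *
        ∑' m : ℕ,
          (2 : ℝ) ^ (((m + (M + 1) : ℕ) : ℝ) * γ * ρ) * φ ((2 : ℝ) ^ (m + (M + 1))) ^ (-ρ)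
        ≤ C := by
  -- pick a point `t₀` witnessing `γ < β_φ`
  have hSne : {x : ℝ | ∃ t : ℝ, 1 < t ∧ x = Real.log (lowerRatio φ t) / Real.log t}.Nonempty :=
    ⟨_, ⟨2, one_lt_two, rfl⟩⟩
  have hγ' : γ < sSup {x : ℝ | ∃ t : ℝ, 1 < t ∧ x = Real.log (lowerRatio φ t) / Real.log t} := hγ
  obtain ⟨x, hxS, hγx⟩ := exists_lt_of_lt_csSup hSne hγ'
  obtain ⟨t₀, ht₀, rfl⟩ := hxS
  set r : ℝ := Real.log (lowerRatio φ t₀) / Real.log t₀ with hr_def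
  have t₀pos : (0:ℝ) < t₀ := lt_trans one_pos ht₀
  have hlogt₀ : 0 < Real.log t₀ := Real.log_pos ht₀
  have hlrt₀pos : 0 < lowerRatio φ t₀ := hφ.lower_pos t₀ ht₀.le
  have hgt₀ : t₀ ^ r = lowerRatio φ t₀ := by
    rw [hr_def, Real.rpow_def_of_pos t₀pos]
    have h : Real.log t₀ * (Real.log (lowerRatio φ t₀) / Real.log t₀)
        = Real.log (lowerRatio φ t₀) := by field_simp
    rw [h, Real.exp_log hlrt₀pos]
  -- measurable superadditive function `F`
  set F : ℝ → ℝ := fun x => Real.log (lowerRatio φ (Real.exp |x|)) with hF_def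
  have hmem : ∀ x : ℝ, Real.exp |x| ∈ Set.Ici (1:ℝ) := fun x => Real.one_le_exp (abs_nonneg x)
  have hFmeas : Measurable F := by
    have h1 : Measurable fun x : ℝ => (⟨Real.exp |x|, hmem x⟩ : Set.Ici (1:ℝ)) :=
      Measurable.subtype_mk (Real.measurable_exp.comp continuous_abs.measurable)
    exact Real.measurable_log.comp (hφ.lower_meas.comp h1)
  have hFx : ∀ x : ℝ, 0 ≤ x → F x = Real.log (lowerRatio φ (Real.exp x)) := by
    intro x hx
    rw [hF_def]
    simp only
    rw [abs_of_nonneg hx]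
  have hFsuper : ∀ x y : ℝ, 0 ≤ x → 0 ≤ y → F x + F y ≤ F (x + y) := by
    intro x y hx hy
    rw [hFx x hx, hFx y hy, hFx _ (by linarith), Real.exp_add]
    have h1 : 0 < lowerRatio φ (Real.exp x) := hφ.lower_pos _ (Real.one_le_exp hx)
    have h2 : 0 < lowerRatio φ (Real.exp y) := hφ.lower_pos _ (Real.one_le_exp hy)
    rw [← Real.log_mul h1.ne' h2.ne']
    apply Real.log_le_log (mul_pos h1 h2)
    exact lr_supermul hφ (Real.one_le_exp hx) (Real.one_le_exp hy)
  obtain ⟨C', hC'⟩ := steinhaus_lower F hFmeas hFsuper hlogt₀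
    (by linarith : Real.log t₀ ≤ 2 * Real.log t₀)
  -- lower bound of `lowerRatio` on `[t₀, t₀²]`
  have hcb : ∀ u : ℝ, t₀ ≤ u → u ≤ t₀ ^ (2:ℕ) → Real.exp C' ≤ lowerRatio φ u := by
    intro u hu1 hu2
    have hupos : 0 < u := lt_of_lt_of_le t₀pos hu1
    have hx1 : Real.log t₀ ≤ Real.log u := Real.log_le_log t₀pos hu1
    have hx2 : Real.log u ≤ 2 * Real.log t₀ := by
      calc Real.log u ≤ Real.log (t₀ ^ (2:ℕ)) := Real.log_le_log hupos hu2
        _ = 2 * Real.log t₀ := by rw [Real.log_pow]; norm_num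
    have hFlog := hC' (Real.log u) hx1 hx2
    rw [hFx _ (le_trans hlogt₀.le hx1), Real.exp_log hupos] at hFlog
    calc Real.exp C' ≤ Real.exp (Real.log (lowerRatio φ u)) := Real.exp_le_exp.mpr hFlog
      _ = lowerRatio φ u := Real.exp_log (hφ.lower_pos u (le_trans ht₀.le hu1))
  obtain ⟨c₁, hc₁pos, hdy⟩ := lr_dyadic hφ ht₀ (le_of_eq hgt₀) (Real.exp_pos C') hcb
  -- geometric majorant
  set q : ℝ := (2:ℝ) ^ ((γ - r) * ρ) with hq_def
  have hq_pos : 0 < q := Real.rpow_pos_of_pos two_pos _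
  have hq_lt : q < 1 := by
    apply Real.rpow_lt_one_of_one_lt_of_neg one_lt_two
    nlinarith
  set a : ℕ → ℝ :=
    fun i => (2:ℝ) ^ (((i:ℝ) + 1) * γ * ρ) * lowerRatio φ (2 ^ (i+1)) ^ (-ρ) with ha_def
  have hlrpos : ∀ i : ℕ, 0 < lowerRatio φ ((2:ℝ) ^ (i+1)) :=
    fun i => hφ.lower_pos _ (one_le_pow₀ one_le_two)
  have ha_nonneg : ∀ i, 0 ≤ a i := fun i =>
    mul_nonneg (Real.rpow_pos_of_pos two_pos _).le (Real.rpow_nonneg (hlrpos i).le _)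
  have ha_le : ∀ i : ℕ, a i ≤ (c₁ ^ (-ρ) * q) * q ^ i := by
    intro i
    have hdyi := hdy (i+1) (Nat.le_add_left 1 i)
    have hcast : (((i+1 : ℕ)):ℝ) = (i:ℝ) + 1 := by push_cast; ring
    rw [hcast] at hdyi
    have hbpos : 0 < c₁ * (2:ℝ) ^ (((i:ℝ)+1) * r) :=
      mul_pos hc₁pos (Real.rpow_pos_of_pos two_pos _)
    have h1 : lowerRatio φ ((2:ℝ) ^ (i+1)) ^ (-ρ) ≤ (c₁ * (2:ℝ) ^ (((i:ℝ)+1) * r)) ^ (-ρ) :=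
      Real.rpow_le_rpow_of_nonpos hbpos hdyi (neg_nonpos.mpr hρ.le)
    have h2 : (c₁ * (2:ℝ) ^ (((i:ℝ)+1) * r)) ^ (-ρ)
        = c₁ ^ (-ρ) * (2:ℝ) ^ (((i:ℝ)+1) * r * (-ρ)) := by
      rw [Real.mul_rpow hc₁pos.le (Real.rpow_pos_of_pos two_pos _).le,
        ← Real.rpow_mul (by norm_num : (0:ℝ) ≤ 2)]
    calc a i
        ≤ (2:ℝ) ^ (((i:ℝ)+1) * γ * ρ) * (c₁ ^ (-ρ) * (2:ℝ) ^ (((i:ℝ)+1) * r * (-ρ))) := by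
          simp only [ha_def]
          rw [← h2]
          exact mul_le_mul_of_nonneg_left h1 (Real.rpow_pos_of_pos two_pos _).le
      _ = c₁ ^ (-ρ) * ((2:ℝ) ^ (((i:ℝ)+1) * γ * ρ) * (2:ℝ) ^ (((i:ℝ)+1) * r * (-ρ))) := by ring
      _ = c₁ ^ (-ρ) * (2:ℝ) ^ (((i:ℝ)+1) * γ * ρ + ((i:ℝ)+1) * r * (-ρ)) := by
          rw [← Real.rpow_add two_pos]
      _ = (c₁ ^ (-ρ) * q) * q ^ i := by
          have hq_pow : q ^ i = (2:ℝ) ^ ((γ - r) * ρ * i) := by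
            rw [hq_def, ← Real.rpow_natCast ((2:ℝ) ^ ((γ - r) * ρ)) i,
              ← Real.rpow_mul (by norm_num : (0:ℝ) ≤ 2)]
          rw [hq_pow, hq_def, mul_assoc (c₁ ^ (-ρ)), ← Real.rpow_add two_pos]
          congr 1
          ring
  have hgeom : Summable (fun i : ℕ => (c₁ ^ (-ρ) * q) * q ^ i) :=
    (summable_geometric_of_lt_one hq_pos.le hq_lt).mul_left _
  have ha_sum : Summable a := Summable.of_nonneg_of_le ha_nonneg ha_le hgeom
  set C : ℝ := ∑' i, a i with hC_def
  -- pointwise comparison for each `M`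
  have h2M1 : ∀ n : ℕ, (1:ℝ) ≤ 2 ^ n := fun n => one_le_pow₀ one_le_two
  have key : ∀ M : ℕ, ∀ m : ℕ,
      (2:ℝ) ^ (((m + (M + 1) : ℕ) : ℝ) * γ * ρ) * φ ((2:ℝ) ^ (m + (M + 1))) ^ (-ρ)
        ≤ ((2:ℝ) ^ ((M:ℝ) * γ * ρ) * φ ((2:ℝ) ^ M) ^ (-ρ)) * a m := by
    intro M m
    have hφM : 0 < φ ((2:ℝ) ^ M) := hφ.pos _ (h2M1 M)
    have hsplit : (2:ℝ) ^ (m + (M + 1)) = (2:ℝ) ^ (m + 1) * (2:ℝ) ^ M := by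
      rw [← pow_add]
      congr 1
      omega
    have hmul : lowerRatio φ ((2:ℝ) ^ (m+1)) * φ ((2:ℝ) ^ M) ≤ φ ((2:ℝ) ^ (m + (M+1))) := by
      rw [hsplit]
      exact lr_mul_le hφ (h2M1 (m+1)) (h2M1 M)
    have hppos : 0 < lowerRatio φ ((2:ℝ) ^ (m+1)) * φ ((2:ℝ) ^ M) := mul_pos (hlrpos m) hφM
    have h1 : φ ((2:ℝ) ^ (m + (M+1))) ^ (-ρ)
        ≤ lowerRatio φ ((2:ℝ) ^ (m+1)) ^ (-ρ) * φ ((2:ℝ) ^ M) ^ (-ρ) := by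
      calc φ ((2:ℝ) ^ (m + (M+1))) ^ (-ρ)
          ≤ (lowerRatio φ ((2:ℝ) ^ (m+1)) * φ ((2:ℝ) ^ M)) ^ (-ρ) :=
            Real.rpow_le_rpow_of_nonpos hppos hmul (neg_nonpos.mpr hρ.le)
        _ = _ := Real.mul_rpow (hlrpos m).le hφM.le
    have h2 : (2:ℝ) ^ (((m + (M + 1) : ℕ) : ℝ) * γ * ρ)
        = (2:ℝ) ^ ((M:ℝ) * γ * ρ) * (2:ℝ) ^ (((m:ℝ) + 1) * γ * ρ) := by
      rw [← Real.rpow_add two_pos]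
      congr 1
      push_cast
      ring
    calc (2:ℝ) ^ (((m + (M + 1) : ℕ) : ℝ) * γ * ρ) * φ ((2:ℝ) ^ (m + (M + 1))) ^ (-ρ)
        ≤ (2:ℝ) ^ (((m + (M + 1) : ℕ) : ℝ) * γ * ρ) *
            (lowerRatio φ ((2:ℝ) ^ (m+1)) ^ (-ρ) * φ ((2:ℝ) ^ M) ^ (-ρ)) :=
          mul_le_mul_of_nonneg_left h1 (Real.rpow_pos_of_pos two_pos _).le
      _ = ((2:ℝ) ^ ((M:ℝ) * γ * ρ) * φ ((2:ℝ) ^ M) ^ (-ρ)) * a m := by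
          rw [h2]
          simp only [ha_def]
          ring
  have hsum : ∀ M : ℕ, 1 ≤ M →
      Summable (fun m : ℕ =>
        (2 : ℝ) ^ (((m + (M + 1) : ℕ) : ℝ) * γ * ρ) * φ ((2 : ℝ) ^ (m + (M + 1))) ^ (-ρ)) := by
    intro M _
    refine Summable.of_nonneg_of_le (fun m => ?_) (key M) (ha_sum.mul_left _)
    exact mul_nonneg (Real.rpow_pos_of_pos two_pos _).le
      (Real.rpow_nonneg (hφ.pos _ (h2M1 _)).le _)
  refine ⟨hsum, C, fun M hM => ?_⟩
  have hφM : 0 < φ ((2:ℝ) ^ M) := hφ.pos _ (h2M1 M)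
  have htsum : (∑' m : ℕ,
        (2 : ℝ) ^ (((m + (M + 1) : ℕ) : ℝ) * γ * ρ) * φ ((2 : ℝ) ^ (m + (M + 1))) ^ (-ρ))
      ≤ ((2:ℝ) ^ ((M:ℝ) * γ * ρ) * φ ((2:ℝ) ^ M) ^ (-ρ)) * C := by
    rw [hC_def, ← tsum_mul_left]
    exact Summable.tsum_le_tsum (key M) (hsum M hM) (ha_sum.mul_left _)
  have hpre : 0 ≤ φ ((2:ℝ) ^ M) ^ ρ * (2:ℝ) ^ (-(M:ℝ) * γ * ρ) :=
    mul_nonneg (Real.rpow_nonneg hφM.le _) (Real.rpow_pos_of_pos two_pos _).le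
  calc φ ((2:ℝ) ^ M) ^ ρ * (2:ℝ) ^ (-(M:ℝ) * γ * ρ) *
        ∑' m : ℕ,
          (2 : ℝ) ^ (((m + (M + 1) : ℕ) : ℝ) * γ * ρ) * φ ((2 : ℝ) ^ (m + (M + 1))) ^ (-ρ)
      ≤ φ ((2:ℝ) ^ M) ^ ρ * (2:ℝ) ^ (-(M:ℝ) * γ * ρ) *
          (((2:ℝ) ^ ((M:ℝ) * γ * ρ) * φ ((2:ℝ) ^ M) ^ (-ρ)) * C) :=
        mul_le_mul_of_nonneg_left htsum hpre
    _ = (φ ((2:ℝ) ^ M) ^ ρ * φ ((2:ℝ) ^ M) ^ (-ρ)) *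
          ((2:ℝ) ^ (-(M:ℝ) * γ * ρ) * (2:ℝ) ^ ((M:ℝ) * γ * ρ)) * C := by ring
    _ = C := by
        rw [← Real.rpow_add hφM, ← Real.rpow_add two_pos,
          show ρ + -ρ = 0 by ring, show -(M:ℝ) * γ * ρ + (M:ℝ) * γ * ρ = 0 by ring,
          Real.rpow_zero, Real.rpow_zero, one_mul, one_mul]
end

section
/- Let X and Y be Banach spaces and T : X → Y a bounded linear operator. Let f : ℕ → ℝ be a positive increasing function satisfying f(k) ∼ f(2k), i.e., there is a constant c₀ > 0 with f(2k) ≤ c₀ f(k) for all k. Then there is a constant C > 0 depending only on f such that for all n ∈ ℕ, sup_{k ≤ n} f(k) e_k(T) ≤ C · sup_{k ≤ n} f(k) d_k(T). -/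
open scoped ENNReal

/-- The `k`-th entropy number of a bounded linear operator:
`e_k(T) = inf { ε > 0 : ∃ y₁, …, y_{2^{k-1}} ∈ Y, ∀ ‖x‖ ≤ 1, ∃ i, ‖T x - y_i‖ ≤ ε }`. -/
noncomputable def entropyNumber {X Y : Type*} [NormedAddCommGroup X] [NormedAddCommGroup Y]
    [NormedSpace ℝ X] [NormedSpace ℝ Y] (T : X →L[ℝ] Y) (k : ℕ) : ℝ :=
  sInf {ε : ℝ | 0 < ε ∧ ∃ y : Fin (2 ^ (k - 1)) → Y,
    ∀ x : X, ‖x‖ ≤ 1 → ∃ i, ‖T x - y i‖ ≤ ε}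

/-- The `k`-th Kolmogorov number of a bounded linear operator:
`d_k(T) = inf { sup_{‖x‖ ≤ 1} dist(T x, N) : N subspace of Y, dim N < k }`. -/
noncomputable def kolmogorovNumber {X Y : Type*} [NormedAddCommGroup X] [NormedAddCommGroup Y]
    [NormedSpace ℝ X] [NormedSpace ℝ Y] (T : X →L[ℝ] Y) (k : ℕ) : ℝ :=
  sInf {r : ℝ | ∃ N : Submodule ℝ Y, Module.rank ℝ N < k ∧
    r = sSup {c : ℝ | ∃ x : X, ‖x‖ ≤ 1 ∧ c = Metric.infDist (T x) (N : Set Y)}}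

section AuxCover
open Metric Set
variable {E : Type*}

lemma sep_card_le [NormedAddCommGroup E] [NormedSpace ℝ E] [FiniteDimensional ℝ E]
    {c : E} {R : ℝ} (hR : 0 < R) (s : Finset E) (hs : ∀ x ∈ s, dist x c ≤ R)
    (hsep : ∀ x ∈ s, ∀ y ∈ s, x ≠ y → R/2 ≤ dist x y) :
    s.card ≤ 5 ^ (Module.finrank ℝ E) := by
  classical
  set φ : E → E := fun x => (2/R) • (x - c) with hφ
  have hinj : Function.Injective φ := by
    intro a b hab
    have h2R : (2/R) ≠ 0 := by positivity
    have := smul_right_injective E h2R hab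
    exact sub_left_injective this
  have hcard : (s.image φ).card = s.card := Finset.card_image_of_injective s hinj
  rw [← hcard]
  apply Besicovitch.card_le_of_separated
  · intro x hx
    obtain ⟨a, ha, rfl⟩ := Finset.mem_image.1 hx
    have : ‖φ a‖ = (2/R) * ‖a - c‖ := by
      simp only [hφ, norm_smul, Real.norm_eq_abs,
        abs_of_pos (div_pos two_pos hR)]
    rw [this]
    have hac : ‖a - c‖ ≤ R := by simpa [dist_eq_norm] using hs a ha
    calc (2/R) * ‖a - c‖ ≤ (2/R) * R := by gcongr
      _ = 2 := by field_simp
  · intro x hx y hy hxy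
    obtain ⟨a, ha, rfl⟩ := Finset.mem_image.1 hx
    obtain ⟨b, hb, rfl⟩ := Finset.mem_image.1 hy
    have hab : a ≠ b := fun h => hxy (by rw [h])
    have : ‖φ a - φ b‖ = (2/R) * ‖a - b‖ := by
      simp only [hφ, ← smul_sub, sub_sub_sub_cancel_right, norm_smul,
        Real.norm_eq_abs, abs_of_pos (div_pos two_pos hR)]
    rw [this]
    have := hsep a ha b hb hab
    rw [dist_eq_norm] at this
    calc (1:ℝ) = (2/R) * (R/2) := by field_simp
      _ ≤ (2/R) * ‖a - b‖ := by gcongr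

lemma half_cover [NormedAddCommGroup E] [NormedSpace ℝ E] [FiniteDimensional ℝ E]
    (A : Set E) (c : E) (R : ℝ) (hR : 0 < R) (hA : A ⊆ closedBall c R) :
    ∃ F : Finset E, F.card ≤ 5 ^ (Module.finrank ℝ E) ∧ A ⊆ ⋃ y ∈ F, closedBall y (R/2) := by
  classical
  set P : Finset E → Prop := fun s => ↑s ⊆ A ∧
    ∀ x ∈ s, ∀ y ∈ s, x ≠ y → R/2 ≤ dist x y with hP
  set S : Set ℕ := {m | ∃ s : Finset E, P s ∧ s.card = m} with hS
  have hub : ∀ m ∈ S, m ≤ 5 ^ (Module.finrank ℝ E) := by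
    rintro m ⟨s, ⟨hsub, hsep⟩, rfl⟩
    exact sep_card_le hR s (fun x hx => hA (hsub hx)) hsep
  have hne : S.Nonempty := ⟨0, ∅, ⟨by simp, by simp⟩, rfl⟩
  have hbdd : BddAbove S := ⟨5 ^ (Module.finrank ℝ E), hub⟩
  obtain ⟨s, ⟨hsub, hsep⟩, hcard⟩ := Nat.sSup_mem hne hbdd
  refine ⟨s, by rw [hcard]; exact hub _ (Nat.sSup_mem hne hbdd), ?_⟩
  intro a ha
  by_cases h : ∃ y ∈ s, dist a y ≤ R/2
  · obtain ⟨y, hy, hd⟩ := h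
    exact mem_iUnion₂.2 ⟨y, hy, hd⟩
  · push_neg at h
    exfalso
    have hans : a ∉ s := fun hc => by
      have := h a hc; simp at this; linarith
    have : P (insert a s) := by
      constructor
      · intro x hx
        rcases Finset.mem_insert.1 (by exact_mod_cast hx) with rfl | hx'
        · exact ha
        · exact hsub hx'
      · intro x hx y hy hxy
        rcases Finset.mem_insert.1 hx with rfl | hx' <;>
          rcases Finset.mem_insert.1 hy with rfl | hy'
        · exact absurd rfl hxy
        · exact le_of_lt (h y hy')
        · rw [dist_comm]; exact le_of_lt (h x hx')
        · exact hsep x hx' y hy' hxy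
    have hle : (insert a s).card ≤ sSup S :=
      le_csSup hbdd ⟨insert a s, this, rfl⟩
    rw [Finset.card_insert_of_notMem hans, hcard] at hle
    omega

lemma iter_cover [NormedAddCommGroup E] [NormedSpace ℝ E] [FiniteDimensional ℝ E]
    (t : ℕ) (A : Set E) (c : E) (R : ℝ) (hR : 0 < R) (hA : A ⊆ closedBall c R) :
    ∃ F : Finset E, F.card ≤ 5 ^ (t * Module.finrank ℝ E) ∧
      A ⊆ ⋃ y ∈ F, closedBall y (R / 2 ^ t) := by
  classical
  induction t generalizing A c with
  | zero =>
    exact ⟨{c}, by simp, by simpa using hA⟩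
  | succ t ih =>
    obtain ⟨F, hFcard, hFcov⟩ := ih A c hA
    have step : ∀ y : E, ∃ G : Finset E, G.card ≤ 5 ^ (Module.finrank ℝ E) ∧
        (A ∩ closedBall y (R / 2 ^ t)) ⊆ ⋃ z ∈ G, closedBall z (R / 2 ^ (t+1)) := by
      intro y
      have h2 : R / 2 ^ (t+1) = (R / 2 ^ t) / 2 := by ring
      rw [h2]
      exact half_cover _ y _ (by positivity) (Set.inter_subset_right)
    choose G hGcard hGcov using step
    refine ⟨F.biUnion G, ?_, ?_⟩
    · calc (F.biUnion G).card ≤ ∑ y ∈ F, (G y).card := Finset.card_biUnion_le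
        _ ≤ ∑ _y ∈ F, 5 ^ (Module.finrank ℝ E) := Finset.sum_le_sum fun y _ => hGcard y
        _ = F.card * 5 ^ (Module.finrank ℝ E) := by simp [Finset.sum_const, mul_comm]
        _ ≤ 5 ^ (t * Module.finrank ℝ E) * 5 ^ (Module.finrank ℝ E) := by gcongr
        _ = 5 ^ ((t+1) * Module.finrank ℝ E) := by rw [← pow_add]; ring_nf
    · intro a ha
      obtain ⟨y, hy, hay⟩ := Set.mem_iUnion₂.1 (hFcov ha)
      obtain ⟨z, hz, haz⟩ := Set.mem_iUnion₂.1 (hGcov y ⟨ha, hay⟩)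
      exact Set.mem_iUnion₂.2 ⟨z, Finset.mem_biUnion.2 ⟨y, hy, hz⟩, haz⟩

lemma submodule_cover {Y : Type*} [NormedAddCommGroup Y] [NormedSpace ℝ Y]
    (N : Submodule ℝ Y) [FiniteDimensional ℝ N] (t : ℕ) (A : Set Y) (hAN : A ⊆ (N : Set Y))
    (z₀ : Y) (hz₀ : z₀ ∈ N) (R : ℝ) (hR : 0 < R) (hA : A ⊆ closedBall z₀ R) :
    ∃ F : Finset Y, F.card ≤ 5 ^ (t * Module.finrank ℝ N) ∧
      A ⊆ ⋃ y ∈ F, closedBall y (R / 2 ^ t) := by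
  classical
  set A' : Set N := {w : N | (w : Y) ∈ A} with hA'
  have hsub : A' ⊆ closedBall (⟨z₀, hz₀⟩ : N) R := by
    intro w hw
    have := hA hw
    simpa [mem_closedBall, Subtype.dist_eq] using this
  obtain ⟨F', hF'card, hF'cov⟩ := iter_cover t A' ⟨z₀, hz₀⟩ R hR hsub
  refine ⟨F'.image (fun w : N => (w : Y)), ?_, ?_⟩
  · exact (Finset.card_image_le).trans hF'card
  · intro a ha
    have haN : a ∈ N := hAN ha
    have : (⟨a, haN⟩ : N) ∈ A' := ha
    obtain ⟨z, hz, hdz⟩ := Set.mem_iUnion₂.1 (hF'cov this)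
    refine Set.mem_iUnion₂.2 ⟨(z : Y), Finset.mem_image.2 ⟨z, hz, rfl⟩, ?_⟩
    simpa [mem_closedBall, Subtype.dist_eq] using hdz

end AuxCover

section AuxCover2
open Metric Set
section Basic
variable {X Y : Type*} [NormedAddCommGroup X] [NormedAddCommGroup Y]
    [NormedSpace ℝ X] [NormedSpace ℝ Y] (T : X →L[ℝ] Y)

lemma entSet_mem (k : ℕ) {ε : ℝ} (hε : ‖T‖ < ε) :
    ε ∈ {ε : ℝ | 0 < ε ∧ ∃ y : Fin (2 ^ (k - 1)) → Y,
      ∀ x : X, ‖x‖ ≤ 1 → ∃ i, ‖T x - y i‖ ≤ ε} := by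
  refine ⟨lt_of_le_of_lt (norm_nonneg _) hε, fun _ => 0, fun x hx => ⟨0, ?_⟩⟩
  calc ‖T x - 0‖ = ‖T x‖ := by simp
    _ ≤ ‖T‖ * ‖x‖ := T.le_opNorm x
    _ ≤ ‖T‖ * 1 := by gcongr
    _ ≤ ε := by linarith

lemma entSet_nonempty (k : ℕ) :
    Set.Nonempty {ε : ℝ | 0 < ε ∧ ∃ y : Fin (2 ^ (k - 1)) → Y,
      ∀ x : X, ‖x‖ ≤ 1 → ∃ i, ‖T x - y i‖ ≤ ε} :=
  ⟨‖T‖ + 1, entSet_mem T k (by linarith)⟩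

lemma entSet_bddBelow (k : ℕ) :
    BddBelow {ε : ℝ | 0 < ε ∧ ∃ y : Fin (2 ^ (k - 1)) → Y,
      ∀ x : X, ‖x‖ ≤ 1 → ∃ i, ‖T x - y i‖ ≤ ε} :=
  ⟨0, fun ε hε => le_of_lt hε.1⟩

lemma entropyNumber_nonneg (k : ℕ) : 0 ≤ entropyNumber T k :=
  le_csInf (entSet_nonempty T k) (fun ε hε => le_of_lt hε.1)

lemma entropyNumber_le_of_cover {k : ℕ} {ε : ℝ} (hε : 0 < ε) (A : Finset Y)
    (hcard : A.card ≤ 2 ^ (k - 1)) (hcov : ∀ x : X, ‖x‖ ≤ 1 → ∃ a ∈ A, ‖T x - a‖ ≤ ε) :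
    entropyNumber T k ≤ ε := by
  classical
  apply csInf_le (entSet_bddBelow T k)
  refine ⟨hε, fun i => A.toList.getD i 0, fun x hx => ?_⟩
  obtain ⟨a, haA, ha⟩ := hcov x hx
  have hmem : a ∈ A.toList := Finset.mem_toList.2 haA
  obtain ⟨j, hj, hja⟩ := List.getElem_of_mem hmem
  have hlen : A.toList.length = A.card := Finset.length_toList A
  have hjk : j < 2 ^ (k - 1) := lt_of_lt_of_le (hlen ▸ hj) hcard
  refine ⟨⟨j, hjk⟩, ?_⟩
  show ‖T x - A.toList.getD j 0‖ ≤ ε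
  rw [List.getD_eq_getElem _ _ (hlen ▸ hj : j < A.toList.length), hja]
  exact ha

lemma entropyNumber_antitone : Antitone (entropyNumber T) := by
  intro k k' hkk'
  apply csInf_le_csInf (entSet_bddBelow T k') (entSet_nonempty T k)
  rintro ε ⟨hε, y, hy⟩
  refine ⟨hε, fun i => y ⟨i % 2 ^ (k - 1), Nat.mod_lt _ (Nat.pow_pos two_pos)⟩,
    fun x hx => ?_⟩
  obtain ⟨i, hi⟩ := hy x hx
  have hlt : (i : ℕ) < 2 ^ (k' - 1) :=
    lt_of_lt_of_le i.2 (Nat.pow_le_pow_right (by norm_num) (by omega))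
  exact ⟨⟨i, hlt⟩, by simpa [Nat.mod_eq_of_lt i.2] using hi⟩

end Basic

section Kol
variable {X Y : Type*} [NormedAddCommGroup X] [NormedAddCommGroup Y]
    [NormedSpace ℝ X] [NormedSpace ℝ Y] (T : X →L[ℝ] Y)

lemma kolC_bddAbove (N : Submodule ℝ Y) :
    BddAbove {c : ℝ | ∃ x : X, ‖x‖ ≤ 1 ∧ c = Metric.infDist (T x) (N : Set Y)} := by
  refine ⟨‖T‖, ?_⟩
  rintro c ⟨x, hx, rfl⟩
  calc Metric.infDist (T x) (N : Set Y) ≤ dist (T x) 0 :=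
        Metric.infDist_le_dist_of_mem N.zero_mem
    _ = ‖T x‖ := by simp
    _ ≤ ‖T‖ * ‖x‖ := T.le_opNorm x
    _ ≤ ‖T‖ * 1 := by gcongr
    _ = ‖T‖ := mul_one _

lemma kolC_zero_mem (N : Submodule ℝ Y) :
    (0:ℝ) ∈ {c : ℝ | ∃ x : X, ‖x‖ ≤ 1 ∧ c = Metric.infDist (T x) (N : Set Y)} :=
  ⟨0, by simp, by rw [map_zero]; exact (Metric.infDist_zero_of_mem N.zero_mem).symm⟩

lemma kolC_sSup_nonneg (N : Submodule ℝ Y) :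
    (0:ℝ) ≤ sSup {c : ℝ | ∃ x : X, ‖x‖ ≤ 1 ∧ c = Metric.infDist (T x) (N : Set Y)} :=
  le_csSup (kolC_bddAbove T N) (kolC_zero_mem T N)

lemma kolSet_nonempty {k : ℕ} (hk : 1 ≤ k) :
    Set.Nonempty {r : ℝ | ∃ N : Submodule ℝ Y, Module.rank ℝ N < k ∧
      r = sSup {c : ℝ | ∃ x : X, ‖x‖ ≤ 1 ∧ c = Metric.infDist (T x) (N : Set Y)}} := by
  refine ⟨_, ⊥, ?_, rfl⟩
  rw [rank_bot]
  exact_mod_cast Nat.pos_of_ne_zero (by omega)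

lemma kolSet_bddBelow (k : ℕ) :
    BddBelow {r : ℝ | ∃ N : Submodule ℝ Y, Module.rank ℝ N < k ∧
      r = sSup {c : ℝ | ∃ x : X, ‖x‖ ≤ 1 ∧ c = Metric.infDist (T x) (N : Set Y)}} := by
  refine ⟨0, ?_⟩
  rintro r ⟨N, hN, rfl⟩
  exact kolC_sSup_nonneg T N

lemma kolmogorovNumber_nonneg {k : ℕ} (hk : 1 ≤ k) : 0 ≤ kolmogorovNumber T k :=
  le_csInf (kolSet_nonempty T hk) (fun r hr => by
    obtain ⟨N, hN, rfl⟩ := hr; exact kolC_sSup_nonneg T N)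

lemma norm_le_kolmogorovNumber_one : ‖T‖ ≤ kolmogorovNumber T 1 := by
  apply le_csInf (kolSet_nonempty T le_rfl)
  rintro r ⟨N, hN, rfl⟩
  have hNbot : N = ⊥ := by
    have h0 : Module.rank ℝ N = 0 := by
      have := hN
      simp only [Nat.cast_one, Cardinal.lt_one_iff_zero] at this
      exact this
    exact Submodule.rank_eq_zero.1 h0
  subst hNbot
  apply T.opNorm_le_bound (kolC_sSup_nonneg T ⊥)
  intro x
  rcases eq_or_ne x 0 with rfl | hx
  · simp [kolC_sSup_nonneg T (⊥ : Submodule ℝ Y)]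
  · have hxn : 0 < ‖x‖ := norm_pos_iff.2 hx
    have hmem : ‖T (‖x‖⁻¹ • x)‖ ∈
        {c : ℝ | ∃ x : X, ‖x‖ ≤ 1 ∧ c = Metric.infDist (T x) (((⊥ : Submodule ℝ Y)) : Set Y)} := by
      refine ⟨‖x‖⁻¹ • x, by simp [norm_smul, abs_of_pos (inv_pos.2 hxn),
        inv_mul_cancel₀ hxn.ne'], ?_⟩
      rw [Submodule.bot_coe, Metric.infDist_singleton, dist_zero_right]
    have hle := le_csSup (kolC_bddAbove T ⊥) hmem
    have heq : ‖T (‖x‖⁻¹ • x)‖ = ‖x‖⁻¹ * ‖T x‖ := by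
      rw [map_smul, norm_smul, Real.norm_eq_abs, abs_of_pos (inv_pos.2 hxn)]
    rw [heq] at hle
    calc ‖T x‖ = ‖x‖ * (‖x‖⁻¹ * ‖T x‖) := by field_simp
      _ ≤ ‖x‖ * sSup _ := by gcongr
      _ = sSup _ * ‖x‖ := mul_comm _ _

lemma kolmogorov_extract {k : ℕ} (hk : 1 ≤ k) {a : ℝ} (ha : kolmogorovNumber T k < a) :
    ∃ N : Submodule ℝ Y, Module.rank ℝ N < k ∧
      ∀ x : X, ‖x‖ ≤ 1 → Metric.infDist (T x) (N : Set Y) ≤ a := by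
  obtain ⟨r, hr, hra⟩ := exists_lt_of_csInf_lt (kolSet_nonempty T hk) ha
  obtain ⟨N, hN, rfl⟩ := hr
  refine ⟨N, hN, fun x hx => ?_⟩
  exact le_of_lt (lt_of_le_of_lt (le_csSup (kolC_bddAbove T N) ⟨x, hx, rfl⟩) hra)

end Kol

section Main
variable {X Y : Type*} [NormedAddCommGroup X] [NormedAddCommGroup Y]
    [NormedSpace ℝ X] [NormedSpace ℝ Y]

lemma main_net (T : X →L[ℝ] Y) (f : ℕ → ℝ) (hf_pos : ∀ k, 0 < f k)
    (c₀ : ℝ) (hc₀ : 1 ≤ c₀) (hdouble : ∀ k, f (2 * k) ≤ c₀ * f k)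
    (t : ℕ) (ht : 8 * c₀ + 6 ≤ 2 ^ t)
    (n : ℕ) (s : ℝ) (hs : 0 < s)
    (hd : ∀ m, 1 ≤ m → m ≤ n → kolmogorovNumber T m ≤ s / f m)
    (hT : ‖T‖ ≤ s / f 1) :
    ∀ j : ℕ, 2 ^ j ≤ n → ∃ A : Finset Y, A.card ≤ 5 ^ (t * 2 ^ (j+1)) ∧
      ∀ x : X, ‖x‖ ≤ 1 → ∃ a ∈ A, ‖T x - a‖ ≤ 4 * (s / f (2 ^ j)) := by
  classical
  intro j
  induction j with
  | zero =>
    intro _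
    refine ⟨{0}, by simpa using Nat.one_le_pow _ 5 (by norm_num),
      fun x hx => ⟨0, Finset.mem_singleton_self 0, ?_⟩⟩
    have h1 : ‖T x - 0‖ ≤ ‖T‖ := by
      rw [sub_zero]
      calc ‖T x‖ ≤ ‖T‖ * ‖x‖ := T.le_opNorm x
        _ ≤ ‖T‖ * 1 := by gcongr
        _ = ‖T‖ := mul_one _
    have h2 : s / f 1 ≤ 4 * (s / f 1) := by
      have : 0 < s / f 1 := div_pos hs (hf_pos 1)
      linarith
    simpa using h1.trans (hT.trans h2)
  | succ j ih =>
    intro hjn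
    have hjn' : 2 ^ j ≤ n := le_trans (Nat.pow_le_pow_right (by norm_num) (by omega)) hjn
    obtain ⟨A, hAcard, hAcov⟩ := ih hjn'
    set ε : ℝ := s / f (2 ^ j) with hε
    set ε' : ℝ := s / f (2 ^ (j+1)) with hε'
    have hεpos : 0 < ε := div_pos hs (hf_pos _)
    have hε'pos : 0 < ε' := div_pos hs (hf_pos _)
    have hεε' : ε ≤ c₀ * ε' := by
      have hd2 : f (2 ^ (j+1)) ≤ c₀ * f (2 ^ j) := by
        have h2j : 2 ^ (j+1) = 2 * 2 ^ j := by ring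
        rw [h2j]; exact hdouble _
      have hc₀pos : (0:ℝ) < c₀ := lt_of_lt_of_le one_pos hc₀
      have h1 : ε = (c₀ * s) / (c₀ * f (2 ^ j)) := by
        rw [hε, mul_div_mul_left _ _ hc₀pos.ne']
      have h2 : c₀ * ε' = (c₀ * s) / f (2 ^ (j+1)) := by rw [hε', mul_div_assoc]
      rw [h1, h2]
      exact div_le_div_of_nonneg_left (by positivity) (hf_pos _) hd2
    -- extract approximating subspace at level 2^(j+1)
    have hkol : kolmogorovNumber T (2 ^ (j+1)) < 2 * ε' := by
      have := hd (2 ^ (j+1)) (Nat.one_le_two_pow) hjn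
      linarith
    obtain ⟨N, hNrank, hNapprox⟩ := kolmogorov_extract T (Nat.one_le_two_pow) hkol
    have hNfin : FiniteDimensional ℝ N := Module.rank_lt_aleph0_iff.mp
      (lt_trans hNrank (Cardinal.nat_lt_aleph0 _))
    have hNrk : Module.finrank ℝ N ≤ 2 ^ (j+1) := by
      have := hNrank
      rw [← Module.finrank_eq_rank ℝ N] at this
      exact_mod_cast le_of_lt (by exact_mod_cast this)
    -- cover the relevant portion of N near each a ∈ A
    have hstep : ∀ a : Y, ∃ F : Finset Y, F.card ≤ 5 ^ (t * 2 ^ (j+1)) ∧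
        ((N : Set Y) ∩ Metric.closedBall a (4 * ε + 3 * ε')) ⊆
          ⋃ z ∈ F, Metric.closedBall z ε' := by
      intro a
      by_cases hSa : ((N : Set Y) ∩ Metric.closedBall a (4 * ε + 3 * ε')).Nonempty
      · obtain ⟨z₀, hz₀N, hz₀b⟩ := hSa
        have hsub : ((N : Set Y) ∩ Metric.closedBall a (4 * ε + 3 * ε')) ⊆
            Metric.closedBall z₀ (8 * ε + 6 * ε') := by
          rintro w ⟨hwN, hwb⟩
          rw [Metric.mem_closedBall] at hwb hz₀b ⊢
          calc dist w z₀ ≤ dist w a + dist a z₀ := dist_triangle _ _ _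
            _ = dist w a + dist z₀ a := by rw [dist_comm a z₀]
            _ ≤ (4 * ε + 3 * ε') + (4 * ε + 3 * ε') := add_le_add hwb hz₀b
            _ = 8 * ε + 6 * ε' := by ring
        obtain ⟨F, hFcard, hFcov⟩ := submodule_cover N t _
          (Set.inter_subset_left) z₀ hz₀N (8 * ε + 6 * ε') (by positivity) hsub
        refine ⟨F, le_trans hFcard (Nat.pow_le_pow_right (by norm_num)
          (Nat.mul_le_mul_left t hNrk)), ?_⟩
        refine hFcov.trans (Set.iUnion₂_mono fun z _ => Metric.closedBall_subset_closedBall ?_)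
        -- (8ε + 6ε')/2^t ≤ ε'
        have h2t : (8 * c₀ + 6) * ε' ≤ 2 ^ t * ε' := by gcongr
        have hnum : 8 * ε + 6 * ε' ≤ 2 ^ t * ε' := by nlinarith
        rw [div_le_iff₀ (by positivity : (0:ℝ) < 2 ^ t)]
        calc 8 * ε + 6 * ε' ≤ 2 ^ t * ε' := hnum
          _ = ε' * 2 ^ t := mul_comm _ _
      · exact ⟨∅, by simp, by rw [Set.not_nonempty_iff_eq_empty.1 hSa]; exact Set.empty_subset _⟩
    choose F hFcard hFcov using hstep
    refine ⟨A.biUnion F, ?_, ?_⟩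
    · calc (A.biUnion F).card ≤ ∑ a ∈ A, (F a).card := Finset.card_biUnion_le
        _ ≤ ∑ _a ∈ A, 5 ^ (t * 2 ^ (j+1)) := Finset.sum_le_sum fun a _ => hFcard a
        _ = A.card * 5 ^ (t * 2 ^ (j+1)) := by simp [Finset.sum_const, mul_comm]
        _ ≤ 5 ^ (t * 2 ^ (j+1)) * 5 ^ (t * 2 ^ (j+1)) := by gcongr
        _ = 5 ^ (t * 2 ^ (j+2)) := by rw [← pow_add]; ring_nf
    · intro x hx
      obtain ⟨a, haA, ha⟩ := hAcov x hx
      have hinf : Metric.infDist (T x) (N : Set Y) < 3 * ε' :=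
        lt_of_le_of_lt (hNapprox x hx) (by linarith)
      have hNne : ((N : Set Y)).Nonempty := ⟨0, N.zero_mem⟩
      obtain ⟨z, hzN, hz⟩ := (Metric.infDist_lt_iff hNne).1 hinf
      have hzS : z ∈ ((N : Set Y) ∩ Metric.closedBall a (4 * ε + 3 * ε')) := by
        refine ⟨hzN, ?_⟩
        rw [Metric.mem_closedBall]
        calc dist z a ≤ dist z (T x) + dist (T x) a := dist_triangle _ _ _
          _ ≤ 3 * ε' + 4 * ε := by
              have h1 : dist z (T x) ≤ 3 * ε' := by rw [dist_comm]; exact le_of_lt hz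
              have h2 : dist (T x) a ≤ 4 * ε := by rw [dist_eq_norm]; exact ha
              linarith
          _ = 4 * ε + 3 * ε' := by ring
      obtain ⟨w, hwF, hw⟩ := Set.mem_iUnion₂.1 (hFcov a hzS)
      refine ⟨w, Finset.mem_biUnion.2 ⟨a, haA, hwF⟩, ?_⟩
      rw [← dist_eq_norm]
      calc dist (T x) w ≤ dist (T x) z + dist z w := dist_triangle _ _ _
        _ ≤ 3 * ε' + ε' := add_le_add (le_of_lt hz) (Metric.mem_closedBall.1 hw)
        _ = 4 * ε' := by ring

lemma entropyNumber_le_norm (T : X →L[ℝ] Y) (k : ℕ) : entropyNumber T k ≤ ‖T‖ :=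
  le_of_forall_pos_le_add fun δ hδ =>
    csInf_le (entSet_bddBelow T k) (entSet_mem T k (by linarith))

lemma ent_dyadic (T : X →L[ℝ] Y) (f : ℕ → ℝ) (hf_pos : ∀ k, 0 < f k)
    (c₀ : ℝ) (hc₀ : 1 ≤ c₀) (hdouble : ∀ k, f (2 * k) ≤ c₀ * f k)
    (t : ℕ) (ht : 8 * c₀ + 6 ≤ 2 ^ t)
    (n : ℕ) (s : ℝ) (hs : 0 < s)
    (hd : ∀ m, 1 ≤ m → m ≤ n → kolmogorovNumber T m ≤ s / f m)
    (hT : ‖T‖ ≤ s / f 1) (j : ℕ) (hjn : 2 ^ j ≤ n) :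
    entropyNumber T (6 * t * 2 ^ j + 1) ≤ 4 * (s / f (2 ^ j)) := by
  obtain ⟨A, hAcard, hAcov⟩ :=
    main_net T f hf_pos c₀ hc₀ hdouble t ht n s hs hd hT j hjn
  apply entropyNumber_le_of_cover T (by have := hf_pos (2^j); positivity) A _ hAcov
  calc A.card ≤ 5 ^ (t * 2 ^ (j+1)) := hAcard
    _ ≤ (2 ^ 3) ^ (t * 2 ^ (j+1)) := Nat.pow_le_pow_left (by norm_num) _
    _ = 2 ^ (3 * (t * 2 ^ (j+1))) := by rw [← pow_mul, mul_comm 3]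
    _ = 2 ^ (6 * t * 2 ^ j) := by ring_nf
    _ = 2 ^ ((6 * t * 2 ^ j + 1) - 1) := by simp

lemma pow_double_bound (f : ℕ → ℝ) (hf_pos : ∀ k, 0 < f k)
    (c₀ : ℝ) (hc₀ : 1 ≤ c₀) (hdouble : ∀ k, f (2 * k) ≤ c₀ * f k)
    (i m : ℕ) : f (2 ^ (i + m)) ≤ c₀ ^ m * f (2 ^ i) := by
  induction m with
  | zero => simp
  | succ m ih =>
    have h1 : (2:ℕ) ^ (i + (m+1)) = 2 * 2 ^ (i + m) := by ring
    calc f (2 ^ (i + (m+1))) = f (2 * 2 ^ (i + m)) := by rw [h1]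
      _ ≤ c₀ * f (2 ^ (i + m)) := hdouble _
      _ ≤ c₀ * (c₀ ^ m * f (2 ^ i)) := by
          have hc₀pos : (0:ℝ) < c₀ := lt_of_lt_of_le one_pos hc₀
          gcongr
      _ = c₀ ^ (m+1) * f (2 ^ i) := by ring

end Main

end AuxCover2

/-- Carl-type inequality relating entropy and Kolmogorov numbers: for a positive
increasing `f` with `f(2k) ≲ f(k)` there is `C > 0`, depending only on `f`, with
`sup_{k ≤ n} f(k) e_k(T) ≤ C sup_{k ≤ n} f(k) d_k(T)` for all `n`. -/
theorem entropy_kolmogorov_sup_inequality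
    {X Y : Type*} [NormedAddCommGroup X] [NormedAddCommGroup Y]
    [NormedSpace ℝ X] [NormedSpace ℝ Y] [CompleteSpace X] [CompleteSpace Y]
    (f : ℕ → ℝ) (hf_pos : ∀ k, 0 < f k) (hf_mono : Monotone f)
    (hf_double : ∃ c₀ : ℝ, 0 < c₀ ∧ ∀ k, f (2 * k) ≤ c₀ * f k) :
    ∃ C : ℝ, 0 < C ∧ ∀ T : X →L[ℝ] Y, ∀ n : ℕ, (hn : 1 ≤ n) →
      (Finset.Icc 1 n).sup' (Finset.nonempty_Icc.mpr hn) (fun k => f k * entropyNumber T k)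
        ≤ C * (Finset.Icc 1 n).sup' (Finset.nonempty_Icc.mpr hn)
            (fun k => f k * kolmogorovNumber T k) := by
  classical
  obtain ⟨c₀', hc₀'pos, hdouble'⟩ := hf_double
  set c₁ : ℝ := max c₀' 1 with hc₁
  have hc₁1 : 1 ≤ c₁ := le_max_right _ _
  have hc₁pos : 0 < c₁ := lt_of_lt_of_le one_pos hc₁1
  have hdouble : ∀ k, f (2 * k) ≤ c₁ * f k := fun k =>
    (hdouble' k).trans (by have := (hf_pos k).le; gcongr; exact le_max_left _ _)
  obtain ⟨t', ht'⟩ := pow_unbounded_of_one_lt (8 * c₁ + 6) (one_lt_two (α := ℝ))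
  set t : ℕ := t' + 1 with htdef
  have ht : 8 * c₁ + 6 ≤ 2 ^ t := by
    calc 8 * c₁ + 6 ≤ 2 ^ t' := le_of_lt ht'
      _ ≤ 2 ^ t := by
          have : t' ≤ t := by omega
          gcongr
          · norm_num
  set b : ℕ := 6 * t with hbdef
  have hb1 : 1 ≤ b := by omega
  set C : ℝ := max (f b / f 1) (4 * c₁ ^ (1 + b)) + 1 with hC
  have hCpos : 0 < C := by
    have h1 : (0:ℝ) ≤ 4 * c₁ ^ (1 + b) := by positivity
    have h2 := le_max_right (f b / f 1) (4 * c₁ ^ (1 + b))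
    rw [hC]
    linarith
  refine ⟨C, hCpos, fun T n hn => ?_⟩
  set s : ℝ := (Finset.Icc 1 n).sup' (Finset.nonempty_Icc.mpr hn)
    (fun k => f k * kolmogorovNumber T k) with hsdef
  have hs0 : 0 ≤ s := by
    rw [hsdef]
    refine le_trans ?_ (Finset.le_sup' (fun k => f k * kolmogorovNumber T k)
      (Finset.mem_Icc.2 ⟨le_rfl, hn⟩))
    exact mul_nonneg (hf_pos 1).le (kolmogorovNumber_nonneg T le_rfl)
  apply Finset.sup'_le
  intro k hk
  obtain ⟨hk1, hkn⟩ := Finset.mem_Icc.1 hk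
  rcases eq_or_lt_of_le hs0 with hs | hs
  · -- s = 0 : then ‖T‖ = 0 and all entropy numbers vanish
    have hTd : f 1 * kolmogorovNumber T 1 ≤ s := by
      rw [hsdef]
      exact Finset.le_sup' (fun k => f k * kolmogorovNumber T k)
        (Finset.mem_Icc.2 ⟨le_rfl, hn⟩)
    have hTnorm : ‖T‖ ≤ 0 := by
      have h1 := norm_le_kolmogorovNumber_one T
      have h2 : kolmogorovNumber T 1 ≤ 0 := by
        by_contra h
        push_neg at h
        have := mul_pos (hf_pos 1) h
        rw [← hs] at hTd
        linarith
      linarith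
    have hent : entropyNumber T k ≤ 0 := by
      apply le_of_forall_pos_le_add
      intro δ hδ
      have : entropyNumber T k ≤ δ := csInf_le (entSet_bddBelow T k)
        (entSet_mem T k (lt_of_le_of_lt hTnorm hδ))
      linarith
    calc f k * entropyNumber T k ≤ f k * 0 := by
          have := hf_pos k; nlinarith
      _ = 0 := mul_zero _
      _ ≤ C * s := by rw [← hs]; simp
  · -- s > 0
    have hd : ∀ m, 1 ≤ m → m ≤ n → kolmogorovNumber T m ≤ s / f m := by
      intro m hm1 hmn
      rw [le_div_iff₀ (hf_pos m), mul_comm, hsdef]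
      exact Finset.le_sup' (fun k => f k * kolmogorovNumber T k)
        (Finset.mem_Icc.2 ⟨hm1, hmn⟩)
    have hT : ‖T‖ ≤ s / f 1 :=
      (norm_le_kolmogorovNumber_one T).trans (hd 1 le_rfl hn)
    have hent_dyadic : ∀ j : ℕ, 2 ^ j ≤ n →
        entropyNumber T (b * 2 ^ j + 1) ≤ 4 * (s / f (2 ^ j)) := fun j hj =>
      ent_dyadic T f hf_pos c₁ hc₁1 hdouble t ht n s hs hd hT j hj
    by_cases hkb : k ≤ b
    · -- small k
      have he : entropyNumber T k ≤ s / f 1 := (entropyNumber_le_norm T k).trans hT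
      have hfk : f k ≤ f b := hf_mono hkb
      have hent_nonneg := entropyNumber_nonneg T k
      calc f k * entropyNumber T k ≤ f b * (s / f 1) := by
            apply mul_le_mul hfk he hent_nonneg (hf_pos b).le
        _ = (f b / f 1) * s := by ring
        _ ≤ C * s := by
            apply mul_le_mul_of_nonneg_right _ hs0
            calc f b / f 1 ≤ max (f b / f 1) (4 * c₁ ^ (1 + b)) := le_max_left _ _
              _ ≤ C := by rw [hC]; linarith
    · -- large k : b + 1 ≤ k
      push_neg at hkb
      set J : ℕ := Nat.log 2 ((k - 1) / b) with hJ
      have hq1 : 1 ≤ (k - 1) / b := (Nat.one_le_div_iff (by omega)).2 (by omega)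
      have hJ1 : 2 ^ J ≤ (k - 1) / b := Nat.pow_log_le_self 2 (by omega)
      have hJlow : b * 2 ^ J + 1 ≤ k := by
        have := Nat.mul_le_of_le_div b (2 ^ J) (k-1) (by
          exact (Nat.le_div_iff_mul_le (by omega)).1 hJ1 |> fun h => hJ1)
        have h2 : b * 2 ^ J ≤ k - 1 := by
          calc b * 2 ^ J ≤ b * ((k-1)/b) := by gcongr
            _ ≤ k - 1 := Nat.mul_div_le _ _
        omega
      have hJhigh : k ≤ b * 2 ^ (J + 1) := by
        have h1 : (k - 1) / b < 2 ^ (J + 1) := Nat.lt_pow_succ_log_self (by norm_num) _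
        have h2 : k - 1 < 2 ^ (J+1) * b := (Nat.div_lt_iff_lt_mul (by omega)).1 h1
        calc k = (k - 1) + 1 := by omega
          _ ≤ 2 ^ (J+1) * b := by omega
          _ = b * 2 ^ (J+1) := mul_comm _ _
      have h2Jn : 2 ^ J ≤ n := by
        calc 2 ^ J ≤ b * 2 ^ J := Nat.le_mul_of_pos_left _ (by omega)
          _ ≤ k - 1 := by
              have : b * 2 ^ J + 1 ≤ k := hJlow
              omega
          _ ≤ n := by omega
      have he : entropyNumber T k ≤ 4 * (s / f (2 ^ J)) :=
        (entropyNumber_antitone T hJlow).trans (hent_dyadic J h2Jn)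
      have hfk : f k ≤ c₁ ^ (1 + b) * f (2 ^ J) := by
        have hkle : k ≤ 2 ^ (J + (1 + b)) := by
          calc k ≤ b * 2 ^ (J+1) := hJhigh
            _ ≤ 2 ^ b * 2 ^ (J+1) := by
                have : b ≤ 2 ^ b := Nat.le_of_lt Nat.lt_two_pow_self
                gcongr
            _ = 2 ^ (J + (1 + b)) := by rw [← pow_add]; ring_nf
        calc f k ≤ f (2 ^ (J + (1 + b))) := hf_mono hkle
          _ ≤ c₁ ^ (1 + b) * f (2 ^ J) := pow_double_bound f hf_pos c₁ hc₁1 hdouble J (1+b)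
      have hent_nonneg := entropyNumber_nonneg T k
      calc f k * entropyNumber T k
          ≤ (c₁ ^ (1 + b) * f (2 ^ J)) * (4 * (s / f (2 ^ J))) := by
            apply mul_le_mul hfk he hent_nonneg (by have := hf_pos (2^J); positivity)
        _ = 4 * c₁ ^ (1 + b) * s := by
            field_simp [(hf_pos (2^J)).ne']
        _ ≤ C * s := by
            apply mul_le_mul_of_nonneg_right _ hs0
            calc 4 * c₁ ^ (1 + b) ≤ max (f b / f 1) (4 * c₁ ^ (1 + b)) := le_max_right _ _
              _ ≤ C := by rw [hC]; linarith
end
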